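/- If h and k are positive integers with gcd(h,k) = 1, then ∑_{r=1}^{k-1} ⌊hr/k⌋² = 2h·s(k,h) + (2hk - 3h - k + 3)(h-1)/6, where s(k,h) is the Dedekind sum. -/

import Mathlib

private lemma Ico_succ_int (a b : ℤ) (h : a ≤ b) :
    Finset.Ico a (b + 1) = insert b (Finset.Ico a b) := by
  ext x; simp; omega

private lemma floor_int_div (a b : ℤ) (hb : 0 < b) :
    ⌊(a : ℝ) / (b : ℝ)⌋ = a / b := by
  have hb' : (0:ℝ) < (b:ℝ) := by exact_mod_cast hb
  rw [Int.floor_eq_iff]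
  constructor
  · rw [le_div_iff₀ hb']
    exact_mod_cast Int.ediv_mul_le a hb.ne'
  · rw [div_lt_iff₀ hb']
    exact_mod_cast Int.lt_ediv_add_one_mul_self a hb

private lemma sum_ico_id : ∀ n : ℤ, 1 ≤ n →
    ∑ s ∈ Finset.Ico (1:ℤ) n, (s:ℝ) = (n * (n-1)) / 2 := by
  refine Int.le_induction ?_ ?_
  · norm_num
  · intro n hn ih
    rw [Ico_succ_int 1 n hn, Finset.sum_insert (by simp), ih]
    push_cast; ring

private lemma sum_ico_sq : ∀ n : ℤ, 1 ≤ n →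
    ∑ s ∈ Finset.Ico (1:ℤ) n, (s:ℝ)^2 = n * (n-1) * (2*n-1) / 6 := by
  refine Int.le_induction ?_ ?_
  · norm_num
  · intro n hn ih
    rw [Ico_succ_int 1 n hn, Finset.sum_insert (by simp), ih]
    push_cast; ring

private lemma sum_ico_odd : ∀ n : ℤ, 0 ≤ n →
    ∑ s ∈ Finset.Ico (1:ℤ) (n+1), (2*(s:ℝ) - 1) = (n:ℝ)^2 := by
  refine Int.le_induction ?_ ?_
  · norm_num
  · intro n hn ih
    rw [Ico_succ_int 1 (n+1) (by omega), Finset.sum_insert (by simp), ih]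
    push_cast; ring

noncomputable def dedekindSum (h k : ℤ) : ℝ :=
  ∑ r ∈ Finset.Ico (1 : ℤ) k,
    ((r : ℝ) / k) * ((h * r : ℝ) / k - ⌊(h * r : ℝ) / k⌋ - 1 / 2)

theorem sum_floor_sq (h k : ℤ) (hh : 0 < h) (hk : 0 < k) (hco : IsCoprime h k) :
    ((∑ r ∈ Finset.Ico (1 : ℤ) k, (⌊(h * r : ℝ) / k⌋ : ℝ) ^ 2)) =
      2 * h * dedekindSum k h + (2 * h * k - 3 * h - k + 3) * (h - 1) / 6 := by
  have hh' : (0:ℝ) < (h:ℝ) := by exact_mod_cast hh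
  have hk' : (0:ℝ) < (k:ℝ) := by exact_mod_cast hk
  have hnd : ∀ s : ℤ, s ∈ Finset.Ico (1:ℤ) h → ¬ (h ∣ k * s) := by
    intro s hs hdvd
    rw [Finset.mem_Ico] at hs
    have h1 : h ∣ s := hco.dvd_of_dvd_mul_left hdvd
    have := Int.le_of_dvd (by omega) h1
    omega
  set m : ℤ → ℤ := fun s => k * s / h with hm
  set n : ℤ → ℤ := fun r => h * r / k with hn
  have hm0 : ∀ s ∈ Finset.Ico (1:ℤ) h, 0 ≤ m s := fun s hs => by
    rw [Finset.mem_Ico] at hs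
    exact Int.ediv_nonneg (mul_nonneg hk.le (by omega)) hh.le
  have hmk : ∀ s ∈ Finset.Ico (1:ℤ) h, m s < k := fun s hs => by
    rw [Finset.mem_Ico] at hs
    show k * s / h < k
    rw [Int.ediv_lt_iff_lt_mul hh]
    have : k * s < k * h := mul_lt_mul_of_pos_left hs.2 hk
    linarith
  -- reflection identity for m
  have hpair : ∀ s ∈ Finset.Ico (1:ℤ) h, m s + m (h - s) = k - 1 := by
    intro s hs
    have hsm := hs
    rw [Finset.mem_Ico] at hs
    have hnd' := hnd s hsm
    have he0 : k * s % h ≠ 0 := fun hc => hnd' (Int.dvd_of_emod_eq_zero hc)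
    have he1 : 0 ≤ k * s % h := Int.emod_nonneg _ (by omega)
    have he2 : k * s % h < h := Int.emod_lt_of_pos _ hh
    have hdiv : h * (k * s / h) + k * s % h = k * s := Int.mul_ediv_add_emod _ _
    have hkey : k * (h - s) = (h - (k * s % h)) + h * (k - k * s / h - 1) := by
      linarith [hdiv]
    have hms : m (h - s) = k - k * s / h - 1 := by
      show k * (h - s) / h = _
      rw [hkey, Int.add_mul_ediv_left _ _ (by omega : h ≠ 0),
        Int.ediv_eq_zero_of_lt (by omega) (by omega)]
      ring
    show k * s / h + m (h - s) = k - 1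
    omega
  -- sum of m
  have hMsum : ∑ s ∈ Finset.Ico (1:ℤ) h, ((m s : ℤ):ℝ) = ((h:ℝ)-1)*((k:ℝ)-1)/2 := by
    have hrefl : ∑ s ∈ Finset.Ico (1:ℤ) h, ((m s : ℤ):ℝ)
        = ∑ s ∈ Finset.Ico (1:ℤ) h, ((m (h - s) : ℤ):ℝ) := by
      apply Finset.sum_nbij' (fun s => h - s) (fun s => h - s)
      · intro a ha; rw [Finset.mem_Ico] at *; omega
      · intro a ha; rw [Finset.mem_Ico] at *; omega
      · intro a _; ring
      · intro a _; ring
      · intro a _; norm_num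
    have h2 : (2:ℝ) * ∑ s ∈ Finset.Ico (1:ℤ) h, ((m s : ℤ):ℝ)
        = ∑ _s ∈ Finset.Ico (1:ℤ) h, ((k:ℝ) - 1) := by
      rw [two_mul]
      nth_rewrite 2 [hrefl]
      rw [← Finset.sum_add_distrib]
      apply Finset.sum_congr rfl
      intro s hs
      have hp := hpair s hs
      have hp' : ((m s + m (h - s) : ℤ) : ℝ) = ((k - 1 : ℤ) : ℝ) := by rw [hp]
      push_cast at hp'
      linarith
    rw [Finset.sum_const, nsmul_eq_mul] at h2
    have hcard : ((Finset.Ico (1:ℤ) h).card : ℝ) = (h:ℝ) - 1 := by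
      rw [Int.card_Ico]
      rw [show (((h-1).toNat : ℕ) : ℝ) = (((h-1).toNat : ℤ) : ℝ) from by norm_cast,
        Int.toNat_of_nonneg (by omega : (0:ℤ) ≤ h - 1)]
      push_cast; ring
    rw [hcard] at h2
    linarith
  have hcard : ((Finset.Ico (1:ℤ) h).card : ℝ) = (h:ℝ) - 1 := by
    rw [Int.card_Ico]
    rw [show (((h-1).toNat : ℕ) : ℝ) = (((h-1).toNat : ℤ) : ℝ) from by norm_cast,
      Int.toNat_of_nonneg (by omega : (0:ℤ) ≤ h - 1)]
    push_cast; ring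
  have hfloor : ∀ r : ℤ, ⌊((h:ℝ) * (r:ℝ)) / (k:ℝ)⌋ = n r := by
    intro r
    have hc : ((h:ℝ) * r) = ((h * r : ℤ) : ℝ) := by push_cast; ring
    rw [hc, floor_int_div _ _ hk]
  have hfloor2 : ∀ s : ℤ, ⌊((k:ℝ) * (s:ℝ)) / (h:ℝ)⌋ = m s := by
    intro s
    have hc : ((k:ℝ) * s) = ((k * s : ℤ) : ℝ) := by push_cast; ring
    rw [hc, floor_int_div _ _ hh]
  -- square expansion
  have hsq : ∀ r ∈ Finset.Ico (1:ℤ) k,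
      ((n r : ℤ):ℝ)^2 = ∑ s ∈ Finset.Ico (1:ℤ) h,
        (if s * k ≤ h * r then (2*(s:ℝ) - 1) else 0) := by
    intro r hr
    rw [Finset.mem_Ico] at hr
    have hn0 : 0 ≤ n r := Int.ediv_nonneg (mul_nonneg hh.le (by omega)) hk.le
    have hnh : n r < h := by
      show h * r / k < h
      rw [Int.ediv_lt_iff_lt_mul hk]
      have : h * r < h * k := mul_lt_mul_of_pos_left hr.2 hh
      linarith
    have hcond : ∀ s : ℤ, (s * k ≤ h * r) ↔ s ≤ n r := fun s =>
      (Int.le_ediv_iff_mul_le hk).symm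
    rw [← sum_ico_odd (n r) hn0, ← Finset.sum_filter]
    apply Finset.sum_congr _ (fun _ _ => rfl)
    ext s
    simp only [Finset.mem_filter, Finset.mem_Ico, hcond]
    omega
  -- count for fixed s
  have hcount : ∀ s ∈ Finset.Ico (1:ℤ) h,
      ∑ r ∈ Finset.Ico (1:ℤ) k, (if s * k ≤ h * r then (2*(s:ℝ) - 1) else 0)
        = (2*(s:ℝ) - 1) * ((k:ℝ) - 1 - ((m s : ℤ):ℝ)) := by
    intro s hs
    have hms := hm0 s hs
    have hmk' := hmk s hs
    have hsmem := hs
    rw [Finset.mem_Ico] at hs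
    have hne : ∀ r : ℤ, s * k ≠ h * r := by
      intro r hc
      exact hnd s hsmem ⟨r, by linarith [mul_comm k s]⟩
    have hcond : ∀ r : ℤ, (s * k ≤ h * r) ↔ m s + 1 ≤ r := by
      intro r
      have h1 : (m s < r) ↔ k * s < r * h := Int.ediv_lt_iff_lt_mul hh
      rw [show (m s + 1 ≤ r) ↔ m s < r by omega, h1]
      constructor
      · intro hle
        have := lt_of_le_of_ne hle (hne r)
        linarith [mul_comm s k, mul_comm h r]
      · intro hlt
        linarith [mul_comm s k, mul_comm h r]
    have hfil : (Finset.Ico (1:ℤ) k).filter (fun r => m s + 1 ≤ r)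
        = Finset.Ico (m s + 1) k := by
      ext r
      simp only [Finset.mem_filter, Finset.mem_Ico]
      omega
    calc ∑ r ∈ Finset.Ico (1:ℤ) k, (if s * k ≤ h * r then (2*(s:ℝ) - 1) else 0)
        = ∑ r ∈ (Finset.Ico (1:ℤ) k).filter (fun r => m s + 1 ≤ r), (2*(s:ℝ) - 1) := by
          rw [Finset.sum_filter]
          apply Finset.sum_congr rfl
          intro r _
          simp only [hcond]
      _ = (2*(s:ℝ) - 1) * ((k:ℝ) - 1 - ((m s : ℤ):ℝ)) := by
          rw [hfil, Finset.sum_const, nsmul_eq_mul, Int.card_Ico]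
          rw [show (((k - (m s + 1)).toNat : ℕ) : ℝ) = (((k - (m s + 1)).toNat : ℤ) : ℝ)
              from by norm_cast,
            Int.toNat_of_nonneg (by omega : (0:ℤ) ≤ k - (m s + 1))]
          push_cast
          ring
  -- main computation
  have hmain : ∑ r ∈ Finset.Ico (1 : ℤ) k, (⌊(h * r : ℝ) / k⌋ : ℝ) ^ 2
      = ∑ s ∈ Finset.Ico (1:ℤ) h, (2*(s:ℝ) - 1) * ((k:ℝ) - 1 - ((m s : ℤ):ℝ)) := by
    calc ∑ r ∈ Finset.Ico (1 : ℤ) k, (⌊(h * r : ℝ) / k⌋ : ℝ) ^ 2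
        = ∑ r ∈ Finset.Ico (1 : ℤ) k, ((n r : ℤ):ℝ)^2 := by
          apply Finset.sum_congr rfl
          intro r _
          rw [hfloor r]
      _ = ∑ r ∈ Finset.Ico (1 : ℤ) k, ∑ s ∈ Finset.Ico (1:ℤ) h,
            (if s * k ≤ h * r then (2*(s:ℝ) - 1) else 0) := Finset.sum_congr rfl hsq
      _ = ∑ s ∈ Finset.Ico (1:ℤ) h, ∑ r ∈ Finset.Ico (1 : ℤ) k,
            (if s * k ≤ h * r then (2*(s:ℝ) - 1) else 0) := Finset.sum_comm
      _ = _ := Finset.sum_congr rfl hcount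
  have hded : dedekindSum k h = ∑ s ∈ Finset.Ico (1:ℤ) h,
      ((s:ℝ)/h) * ((k:ℝ)*(s:ℝ)/h - ((m s : ℤ):ℝ) - 1/2) := by
    rw [dedekindSum]
    apply Finset.sum_congr rfl
    intro s _
    rw [hfloor2 s]
  rw [hmain, hded]
  have hterm : ∀ s ∈ Finset.Ico (1:ℤ) h,
      (2*(s:ℝ) - 1) * ((k:ℝ) - 1 - ((m s : ℤ):ℝ))
      = 2*(h:ℝ)*(((s:ℝ)/h) * ((k:ℝ)*(s:ℝ)/h - ((m s : ℤ):ℝ) - 1/2))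
        + ((2*(k:ℝ)-1)*(s:ℝ) + ((m s : ℤ):ℝ) - ((k:ℝ)-1) - (2*(k:ℝ)/h)*(s:ℝ)^2) := by
    intro s _
    field_simp
    ring
  rw [Finset.sum_congr rfl hterm, Finset.sum_add_distrib, ← Finset.mul_sum]
  have hsplit : ∑ s ∈ Finset.Ico (1:ℤ) h,
      ((2*(k:ℝ)-1)*(s:ℝ) + ((m s : ℤ):ℝ) - ((k:ℝ)-1) - (2*(k:ℝ)/h)*(s:ℝ)^2)
      = (2*(k:ℝ)-1)*((h:ℝ)*((h:ℝ)-1)/2) + ((h:ℝ)-1)*((k:ℝ)-1)/2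
        - ((k:ℝ)-1)*((h:ℝ)-1) - (2*(k:ℝ)/h)*((h:ℝ)*((h:ℝ)-1)*(2*(h:ℝ)-1)/6) := by
    rw [Finset.sum_sub_distrib, Finset.sum_sub_distrib, Finset.sum_add_distrib,
      ← Finset.mul_sum, ← Finset.mul_sum, Finset.sum_const, nsmul_eq_mul, hcard,
      sum_ico_id h hh, sum_ico_sq h hh, hMsum]
    ring
  rw [hsplit]
  generalize (∑ s ∈ Finset.Ico (1:ℤ) h, ((s:ℝ)/h) * ((k:ℝ)*(s:ℝ)/h - ((m s : ℤ):ℝ) - 1/2)) = S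
  push_cast
  field_simp
  ring
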